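/- arXiv:1107.4568 — 4 statements merged into one kernel-verified Lean document; each statement's English description precedes it below -/
import Mathlib

section
/- Let m ≥ n ≥ 2 be integers and let (d₂⁺, d₂⁻, …, dₙ⁺, dₙ⁻) be a 2(n−1)-tuple of non-negative integers satisfying m = Σ_{j=2}^{n} (j−1)(dⱼ⁺ + dⱼ⁻) + 1 and m ≥ Σ_{j=2}^{n} j·dⱼ⁺ and m ≥ Σ_{j=2}^{n} j·dⱼ⁻. Then there exist permutations τ⁺, τ⁻, σ of {1, …, m} such that τ⁺ has cycle type consisting of exactly dⱼ⁺ cycles of length j for each 2 ≤ j ≤ n (and fixed points otherwise), τ⁻ has cycle type consisting of exactly dⱼ⁻ cycles of length j for each 2 ≤ j ≤ n, σ is a cycle of order m, and σ ∘ τ⁺ ∘ τ⁻ = 1. -/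
open Equiv Equiv.Perm

namespace Stmt0Aux

def eL (a b : ℕ) : Fin (a + 2) ≃ {x : Fin (a + b + 2) // x.val < a + 2} where
  toFun i := ⟨⟨i.val, by have := i.isLt; omega⟩, i.isLt⟩
  invFun x := ⟨x.1.val, x.2⟩
  left_inv i := rfl
  right_inv x := rfl

def eR (a b : ℕ) : Fin (b + 1) ≃ {x : Fin (a + b + 2) // a + 1 ≤ x.val} where
  toFun i := ⟨⟨a + 1 + i.val, by have := i.isLt; omega⟩, Nat.le_add_right _ _⟩
  invFun x := ⟨x.1.val - (a + 1), by have := x.1.isLt; omega⟩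
  left_inv i := by apply Fin.ext; simp
  right_inv x := by
    apply Subtype.ext; apply Fin.ext; have := x.2; simp; omega

lemma mul_extend (a b : ℕ) :
    (finRotate (a + 2)).extendDomain (eL a b) * (finRotate (b + 1)).extendDomain (eR a b)
      = finRotate (a + b + 2) := by
  ext x
  rw [Perm.mul_apply]
  have hxlt := x.isLt
  rcases (by omega : x.val < a + 1 ∨ (a + 1 ≤ x.val ∧ x.val < a + b + 1) ∨ x.val = a + b + 1) with h | ⟨h1, h2⟩ | h
  · rw [Perm.extendDomain_apply_not_subtype _ (eR a b) (by omega : ¬ a + 1 ≤ x.val)]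
    rw [Perm.extendDomain_apply_subtype _ (eL a b) (by omega : x.val < a + 2)]
    simp only [eL, Equiv.coe_fn_mk, Equiv.coe_fn_symm_mk, finRotate_succ_apply,
      Fin.add_def, Fin.val_one]
    rw [Nat.mod_eq_of_lt (by omega), Nat.mod_eq_of_lt (by omega)]
  · have hinner : (Perm.extendDomain (finRotate (b + 1)) (eR a b)) x
        = ⟨x.val + 1, by omega⟩ := by
      rw [Perm.extendDomain_apply_subtype _ (eR a b) h1]
      apply Fin.ext
      simp only [eR, Equiv.coe_fn_mk, Equiv.coe_fn_symm_mk, finRotate_succ_apply,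
        Fin.add_def, Fin.val_one', Fin.val_mk]
      rw [Nat.mod_eq_of_lt (show 1 < b + 1 by omega), Nat.mod_eq_of_lt (by omega)]
      omega
    rw [hinner, Perm.extendDomain_apply_not_subtype _ (eL a b) (by simp; omega)]
    simp only [finRotate_succ_apply, Fin.add_def, Fin.val_one, Fin.val_mk]
    rw [Nat.mod_eq_of_lt (by omega)]
  · have hinner : (Perm.extendDomain (finRotate (b + 1)) (eR a b)) x
        = ⟨a + 1, by omega⟩ := by
      rw [Perm.extendDomain_apply_subtype _ (eR a b) (by omega)]
      apply Fin.ext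
      simp only [eR, Equiv.coe_fn_mk, Equiv.coe_fn_symm_mk, finRotate_succ_apply,
        Fin.add_def, Fin.val_one', Fin.val_mk]
      have hm : (x.val - (a + 1) + 1 % (b + 1)) % (b + 1) = 0 := by
        rcases Nat.eq_zero_or_pos b with rfl | hb
        · omega
        · rw [Nat.mod_eq_of_lt (show 1 < b + 1 by omega),
            (by omega : x.val - (a + 1) + 1 = b + 1), Nat.mod_self]
      rw [hm]
    rw [hinner, Perm.extendDomain_apply_subtype _ (eL a b) (by simp)]
    simp only [eL, Equiv.coe_fn_mk, Equiv.coe_fn_symm_mk, finRotate_succ_apply,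
      Fin.add_def, Fin.val_one, Fin.val_mk]
    rw [(by omega : a + 1 + 1 = a + 2), Nat.mod_self, (by omega : x.val + 1 = a + b + 2),
      Nat.mod_self]

lemma peel (a b : ℕ) (μp μm : Multiset ℕ) (P M : Perm (Fin (b + 1)))
    (hP : P.cycleType = μp) (hM : M.cycleType = μm) (hPM : P * M = finRotate (b + 1))
    (h0 : P 0 = 0) :
    ∃ P' M' : Perm (Fin (a + b + 2)), P'.cycleType = (a + 2) ::ₘ μp ∧ M'.cycleType = μm ∧
      P' * M' = finRotate (a + b + 2) := by
  set C := (finRotate (a + 2)).extendDomain (eL a b) with hC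
  set E := P.extendDomain (eR a b) with hE
  set F := M.extendDomain (eR a b) with hF
  have hdisj : Perm.Disjoint C E := by
    intro x
    rcases (by omega : x.val < a + 1 ∨ x.val = a + 1 ∨ a + 2 ≤ x.val) with h | h | h
    · right
      rw [hE, Perm.extendDomain_apply_not_subtype _ (eR a b) (by omega : ¬ a + 1 ≤ x.val)]
    · right
      rw [hE, Perm.extendDomain_apply_subtype _ (eR a b) (by omega : a + 1 ≤ x.val)]
      have h1 : (eR a b).symm ⟨x, by omega⟩ = 0 := by
        apply Fin.ext
        simp only [eR, Equiv.coe_fn_symm_mk, Fin.val_mk, Fin.val_zero]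
        omega
      rw [h1, h0]
      apply Fin.ext
      simp only [eR, Equiv.coe_fn_mk, Fin.val_mk, Fin.val_zero]
      omega
    · left
      rw [hC, Perm.extendDomain_apply_not_subtype _ (eL a b) (by omega : ¬ x.val < a + 2)]
  refine ⟨C * E, F, ?_, ?_, ?_⟩
  · rw [hdisj.cycleType_mul, hC, hE, cycleType_extendDomain, cycleType_extendDomain,
      cycleType_finRotate, hP, ← Multiset.singleton_add]
  · rw [hF, cycleType_extendDomain, hM]
  · rw [mul_assoc, hE, hF, Perm.extendDomain_mul, hPM, hC, mul_extend]

lemma swapSides {m : ℕ} {μp μm : Multiset ℕ}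
    (h : ∃ P M : Perm (Fin m), P.cycleType = μp ∧ M.cycleType = μm ∧ P * M = finRotate m) :
    ∃ P M : Perm (Fin m), P.cycleType = μm ∧ M.cycleType = μp ∧ P * M = finRotate m := by
  obtain ⟨P, M, hP, hM, hPM⟩ := h
  refine ⟨P * M * P⁻¹, P, ?_, hP, ?_⟩
  · rw [cycleType_conj, hM]
  · rw [inv_mul_cancel_right, hPM]

lemma map_sub_one_sum {μ : Multiset ℕ} (h : ∀ l ∈ μ, 1 ≤ l) :
    (μ.map (· - 1)).sum + μ.card = μ.sum := by
  induction μ using Multiset.induction with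
  | empty => simp
  | cons a s ih =>
    have ha := h a (Multiset.mem_cons_self a s)
    have := ih (fun l hl => h l (Multiset.mem_cons_of_mem hl))
    simp only [Multiset.map_cons, Multiset.sum_cons, Multiset.card_cons]
    omega

lemma two_mul_card_le_sum {μ : Multiset ℕ} (h : ∀ l ∈ μ, 2 ≤ l) :
    2 * μ.card ≤ μ.sum := by
  induction μ using Multiset.induction with
  | empty => simp
  | cons a s ih =>
    have ha := h a (Multiset.mem_cons_self a s)
    have := ih (fun l hl => h l (Multiset.mem_cons_of_mem hl))
    simp only [Multiset.sum_cons, Multiset.card_cons]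
    omega

lemma key : ∀ (t : ℕ) (μp μm : Multiset ℕ) (m : ℕ),
    μp.card + μm.card = t →
    (∀ l ∈ μp, 2 ≤ l) → (∀ l ∈ μm, 2 ≤ l) →
    m = (μp.map (· - 1)).sum + ((μm.map (· - 1)).sum + 1) →
    μp.sum ≤ m → μm.sum ≤ m →
    ∃ P M : Perm (Fin m), P.cycleType = μp ∧ M.cycleType = μm ∧ P * M = finRotate m := by
  intro t
  induction t with
  | zero =>
    intro μp μm m hcard hp2 hm2 hgen _ _
    obtain rfl : μp = 0 := Multiset.card_eq_zero.1 (by omega)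
    obtain rfl : μm = 0 := Multiset.card_eq_zero.1 (by omega)
    obtain rfl : m = 1 := by simpa using hgen
    exact ⟨1, 1, by simp, by simp, Subsingleton.elim _ _⟩
  | succ t IH =>
    -- first a helper that peels a given cycle from the left factor
    have main : ∀ (μp μm : Multiset ℕ) (m : ℕ), μp.card + μm.card = t + 1 →
        (∀ l ∈ μp, 2 ≤ l) → (∀ l ∈ μm, 2 ≤ l) →
        m = (μp.map (· - 1)).sum + ((μm.map (· - 1)).sum + 1) →
        μp.sum ≤ m → μm.sum ≤ m →
        ∀ j ∈ μp, μm.sum + j ≤ m + 1 →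
        ∃ P M : Perm (Fin m), P.cycleType = μp ∧ M.cycleType = μm ∧ P * M = finRotate m := by
      intro μp μm m hcard hp2 hm2 hgen hps hms j hj hcond
      obtain ⟨a, rfl⟩ : ∃ a, j = a + 2 := ⟨j - 2, by have := hp2 j hj; omega⟩
      have hcons : (a + 2) ::ₘ μp.erase (a + 2) = μp := Multiset.cons_erase hj
      have hsum' : μp.sum = (a + 2) + (μp.erase (a + 2)).sum := by
        conv_lhs => rw [← hcons]
        rw [Multiset.sum_cons]
      have hcard' : μp.card = (μp.erase (a + 2)).card + 1 := by
        conv_lhs => rw [← hcons]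
        rw [Multiset.card_cons]
      have hmap' : (μp.map (· - 1)).sum
          = (a + 1) + ((μp.erase (a + 2)).map (· - 1)).sum := by
        conv_lhs => rw [← hcons]
        rw [Multiset.map_cons, Multiset.sum_cons]
        omega
      obtain ⟨b, hb⟩ : ∃ b, m = a + b + 2 := ⟨m - a - 2, by omega⟩
      subst hb
      have hp2' : ∀ l ∈ μp.erase (a + 2), 2 ≤ l :=
        fun l hl => hp2 l (Multiset.mem_of_mem_erase hl)
      obtain ⟨P, M, hP, hM, hPM⟩ := IH (μp.erase (a + 2)) μm (b + 1)
        (by omega) hp2' hm2 (by omega) (by omega) (by omega)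
      -- find a fixed point of P and move it to 0 by conjugating with a rotation
      have hfix : ∃ s : Fin (b + 1), P s = s := by
        by_contra hcon
        push_neg at hcon
        have huniv : P.support = Finset.univ :=
          Finset.eq_univ_iff_forall.2 fun s => Perm.mem_support.2 (hcon s)
        have hsc := Perm.sum_cycleType P
        rw [hP, huniv, Finset.card_univ, Fintype.card_fin] at hsc
        omega
      obtain ⟨s, hs⟩ := hfix
      have hrot : ∃ r : Perm (Fin (b + 1)),
          r * finRotate (b + 1) * r⁻¹ = finRotate (b + 1) ∧ r s = 0 := by
        rcases Nat.eq_zero_or_pos b with rfl | hbpos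
        · exact ⟨1, by simp, Fin.ext (by omega)⟩
        · obtain ⟨c, rfl⟩ : ∃ c, b = c + 1 := ⟨b - 1, by omega⟩
          have hcyc : (finRotate (c + 2)).IsCycle := isCycle_finRotate
          have hns : ∀ y : Fin (c + 2), finRotate (c + 2) y ≠ y := by
            intro y
            have : y ∈ (finRotate (c + 2)).support := by
              rw [support_finRotate]; exact Finset.mem_univ y
            exact Perm.mem_support.1 this
          obtain ⟨i, hi⟩ := hcyc.sameCycle (hns s) (hns 0)
          refine ⟨finRotate (c + 2) ^ i, ?_, hi⟩
          rw [mul_inv_eq_iff_eq_mul, (Commute.refl _).zpow_left i]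
      obtain ⟨r, hr, hrs⟩ := hrot
      have hr0 : (r * P * r⁻¹) 0 = 0 := by
        have : r⁻¹ 0 = s := by rw [← hrs]; exact r.symm_apply_apply s
        simp only [Perm.mul_apply, this, hs, hrs]
      have hPM' : (r * P * r⁻¹) * (r * M * r⁻¹) = finRotate (b + 1) := by
        rw [show (r * P * r⁻¹) * (r * M * r⁻¹) = r * (P * M) * r⁻¹ by group, hPM, hr]
      obtain ⟨Q, N, hQ, hN, hQN⟩ := peel a b (μp.erase (a + 2)) μm
        (r * P * r⁻¹) (r * M * r⁻¹) (by rw [cycleType_conj, hP])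
        (by rw [cycleType_conj, hM]) hPM' hr0
      exact ⟨Q, N, by rw [hQ, hcons], hN, hQN⟩
    intro μp μm m hcard hp2 hm2 hgen hps hms
    by_cases hc : ∃ j ∈ μp, μm.sum + j ≤ m + 1
    · obtain ⟨j, hj, hcond⟩ := hc
      exact main μp μm m hcard hp2 hm2 hgen hps hms j hj hcond
    · push_neg at hc
      have hswapgen : m = (μm.map (· - 1)).sum + ((μp.map (· - 1)).sum + 1) := by omega
      have hcond' : ∃ j ∈ μm, μp.sum + j ≤ m + 1 := by
        rcases Multiset.empty_or_exists_mem μp with rfl | ⟨jp, hjp⟩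
        · obtain ⟨jm, hjm⟩ := Multiset.empty_or_exists_mem μm |>.resolve_left
            (by intro h0; rw [h0] at hcard; simp at hcard)
          refine ⟨jm, hjm, ?_⟩
          have : jm ≤ μm.sum := Multiset.le_sum_of_mem hjm
          simp only [Multiset.sum_zero]
          omega
        · obtain ⟨jm, hjm⟩ : ∃ jm, jm ∈ μm := by
            rcases Multiset.empty_or_exists_mem μm with rfl | h
            · exfalso
              have h1 := hc jp hjp
              have h2 : jp ≤ μp.sum := Multiset.le_sum_of_mem hjp
              simp only [Multiset.sum_zero] at h1
              omega
            · exact h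
          refine ⟨jm, hjm, ?_⟩
          by_contra hcon
          push_neg at hcon
          have h1 := hc jp hjp
          have e1 := map_sub_one_sum (μ := μp) (fun l hl => by have := hp2 l hl; omega)
          have e2 := map_sub_one_sum (μ := μm) (fun l hl => by have := hm2 l hl; omega)
          have l1 : jp + 2 * (μp.card - 1) ≤ μp.sum := by
            have := two_mul_card_le_sum (μ := μp.erase jp)
              (fun l hl => hp2 l (Multiset.mem_of_mem_erase hl))
            have hs : μp.sum = jp + (μp.erase jp).sum := by
              conv_lhs => rw [← Multiset.cons_erase hjp]
              rw [Multiset.sum_cons]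
            have hcc : μp.card = (μp.erase jp).card + 1 := by
              conv_lhs => rw [← Multiset.cons_erase hjp]
              rw [Multiset.card_cons]
            omega
          have l2 : jm + 2 * (μm.card - 1) ≤ μm.sum := by
            have := two_mul_card_le_sum (μ := μm.erase jm)
              (fun l hl => hm2 l (Multiset.mem_of_mem_erase hl))
            have hs : μm.sum = jm + (μm.erase jm).sum := by
              conv_lhs => rw [← Multiset.cons_erase hjm]
              rw [Multiset.sum_cons]
            have hcc : μm.card = (μm.erase jm).card + 1 := by
              conv_lhs => rw [← Multiset.cons_erase hjm]
              rw [Multiset.card_cons]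
            omega
          have hcp : 0 < Multiset.card μp :=
            Multiset.card_pos.2 (fun h => by subst h; simp at hjp)
          have hcm : 0 < Multiset.card μm :=
            Multiset.card_pos.2 (fun h => by subst h; simp at hjm)
          omega
      obtain ⟨j, hj, hcond⟩ := hcond'
      exact swapSides (main μm μp m (by omega) hm2 hp2 hswapgen hms hps j hj hcond)

lemma sumsum (f : ℕ → Multiset ℕ) (s : Finset ℕ) :
    (∑ j ∈ s, f j).sum = ∑ j ∈ s, (f j).sum := by
  induction s using Finset.cons_induction with
  | empty => simp
  | cons a t ha ih => rw [Finset.sum_cons, Finset.sum_cons, Multiset.sum_add, ih]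

lemma mapsum (f : ℕ → Multiset ℕ) (g : ℕ → ℕ) (s : Finset ℕ) :
    (∑ j ∈ s, f j).map g = ∑ j ∈ s, (f j).map g := by
  induction s using Finset.cons_induction with
  | empty => simp
  | cons a t ha ih => rw [Finset.sum_cons, Finset.sum_cons, Multiset.map_add, ih]

end Stmt0Aux

open Stmt0Aux

theorem stmt0 (m n : ℕ) (dp dm : ℕ → ℕ) (hn : 2 ≤ n) (hnm : n ≤ m)
    (h1 : m = (∑ j ∈ Finset.Icc 2 n, (j - 1) * (dp j + dm j)) + 1)
    (h2 : ∑ j ∈ Finset.Icc 2 n, j * dp j ≤ m)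
    (h3 : ∑ j ∈ Finset.Icc 2 n, j * dm j ≤ m) :
    ∃ τp τm σ : Equiv.Perm (Fin m),
      τp.cycleType = ∑ j ∈ Finset.Icc 2 n, Multiset.replicate (dp j) j ∧
      τm.cycleType = ∑ j ∈ Finset.Icc 2 n, Multiset.replicate (dm j) j ∧
      σ.IsCycle ∧ σ.support = Finset.univ ∧
      σ * τp * τm = 1 := by
  set μp := ∑ j ∈ Finset.Icc 2 n, Multiset.replicate (dp j) j with hμp
  set μm := ∑ j ∈ Finset.Icc 2 n, Multiset.replicate (dm j) j with hμm
  have hsum : ∀ (d : ℕ → ℕ),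
      (∑ j ∈ Finset.Icc 2 n, Multiset.replicate (d j) j).sum
        = ∑ j ∈ Finset.Icc 2 n, j * d j := by
    intro d
    rw [sumsum]
    exact Finset.sum_congr rfl fun j _ => by
      rw [Multiset.sum_replicate, smul_eq_mul, mul_comm]
  have hmap : ∀ (d : ℕ → ℕ),
      ((∑ j ∈ Finset.Icc 2 n, Multiset.replicate (d j) j).map (· - 1)).sum
        = ∑ j ∈ Finset.Icc 2 n, (j - 1) * d j := by
    intro d
    rw [mapsum, sumsum]
    exact Finset.sum_congr rfl fun j _ => by
      rw [Multiset.map_replicate, Multiset.sum_replicate, smul_eq_mul, mul_comm]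
  have hmem : ∀ (d : ℕ → ℕ) l, l ∈ ∑ j ∈ Finset.Icc 2 n, Multiset.replicate (d j) j
      → 2 ≤ l := by
    intro d l hl
    obtain ⟨j, hj, hl⟩ := Multiset.mem_sum.1 hl
    obtain rfl := Multiset.eq_of_mem_replicate hl
    exact (Finset.mem_Icc.1 hj).1
  have hdist : ∑ j ∈ Finset.Icc 2 n, (j - 1) * (dp j + dm j)
      = (∑ j ∈ Finset.Icc 2 n, (j - 1) * dp j) + ∑ j ∈ Finset.Icc 2 n, (j - 1) * dm j := by
    rw [← Finset.sum_add_distrib]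
    exact Finset.sum_congr rfl fun j _ => mul_add _ _ _
  have hgen : m = (μp.map (· - 1)).sum + ((μm.map (· - 1)).sum + 1) := by
    rw [hμp, hμm, hmap, hmap]
    omega
  obtain ⟨P, M, hP, hM, hPM⟩ := key (μp.card + μm.card) μp μm m rfl
    (hmem dp) (hmem dm) hgen (by rw [hμp, hsum]; exact h2) (by rw [hμm, hsum]; exact h3)
  obtain ⟨k, rfl⟩ : ∃ k, m = k + 2 := ⟨m - 2, by omega⟩
  refine ⟨P, M, (finRotate (k + 2))⁻¹, hP, hM, isCycle_finRotate.inv, ?_, ?_⟩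
  · rw [Equiv.Perm.support_inv, support_finRotate]
  · rw [mul_assoc, hPM, inv_mul_cancel]
end

section
/- Let 2 ≤ i ≤ m be integers and let τ be a permutation of {1, …, m} such that every cycle of τ (including fixed points, regarded as cycles of length 1) contains exactly one element of {1, …, i}. Then the composition τ ∘ (1 2 ⋯ i), where (1 2 ⋯ i) denotes the i-cycle sending 1↦2, 2↦3, …, i↦1, is a single m-cycle on {1, …, m}. -/
set_option maxHeartbeats 1600000 in
theorem stmt1 (m i : ℕ) (hi : 2 ≤ i) (him : i ≤ m) (τ σ : Equiv.Perm (Fin m))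
    (hσ : ∀ x : Fin m, ((σ x : Fin m) : ℕ) =
      if (x : ℕ) + 1 < i then (x : ℕ) + 1
      else if (x : ℕ) = i - 1 then 0 else (x : ℕ))
    (hτ : ∀ x : Fin m, ∃! y : Fin m, (y : ℕ) < i ∧ τ.SameCycle x y) :
    (τ * σ).IsCycle ∧ (τ * σ).support = Finset.univ := by
  have hm : 0 < m := by omega
  set f := τ * σ with hf
  have hfapp : ∀ x, f x = τ (σ x) := fun x => rfl
  -- σ fixes points ≥ i
  have hσfix : ∀ z : Fin m, i ≤ (z : ℕ) → σ z = z := by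
    intro z hz
    have h := hσ z
    rw [if_neg (by omega), if_neg (by omega)] at h
    exact Fin.ext h
  -- Claim A
  have L1 : ∀ x y : Fin m, (y : ℕ) < i → τ.SameCycle x y → f.SameCycle x y := by
    intro x y hyi hxy
    obtain ⟨k, hk, hky⟩ := hxy.exists_pow_eq'
    have hex : ∃ k : ℕ, (τ ^ k) x = y := ⟨k, hky⟩
    classical
    set k0 := Nat.find hex with hk0
    have hk0y : (τ ^ k0) x = y := Nat.find_spec hex
    have hmin : ∀ j < k0, (τ ^ j) x ≠ y := fun j hj => Nat.find_min hex hj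
    have hstep : ∀ j ≤ k0, (f ^ j) x = (τ ^ j) x := by
      intro j hj
      induction j with
      | zero => simp
      | succ n ih =>
        have hn : n ≤ k0 := by omega
        have hge : i ≤ ((τ ^ n) x : ℕ) := by
          by_contra hlt
          push_neg at hlt
          have hsc : τ.SameCycle x ((τ ^ n) x) := ⟨n, rfl⟩
          obtain ⟨w, ⟨hw1, hw2⟩, hwu⟩ := hτ x
          have h1 : (τ ^ n) x = w := hwu _ ⟨hlt, hsc⟩
          have h2 : y = w := hwu _ ⟨hyi, hxy⟩
          exact hmin n (by omega) (h1.trans h2.symm)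
        calc (f ^ (n+1)) x = f ((f ^ n) x) := by
              rw [pow_succ', Equiv.Perm.mul_apply]
          _ = τ (σ ((τ ^ n) x)) := by rw [ih hn]; rfl
          _ = τ ((τ ^ n) x) := by rw [hσfix _ hge]
          _ = (τ ^ (n+1)) x := by rw [pow_succ', Equiv.Perm.mul_apply]
    exact ⟨(k0 : ℤ), by rw [zpow_natCast, hstep k0 le_rfl, hk0y]⟩
  -- reps are in one f-cycle
  have L2 : ∀ s (hs : s < i), f.SameCycle ⟨0, by omega⟩ ⟨s, by omega⟩ := by
    intro s
    induction s with
    | zero => intro _; exact Equiv.Perm.SameCycle.refl _ _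
    | succ n ih =>
      intro hs
      have hn : n < i := by omega
      have ihn := ih hn
      have hσn : σ ⟨n, by omega⟩ = ⟨n + 1, by omega⟩ := by
        have h := hσ ⟨n, by omega⟩
        rw [if_pos (by simpa using hs)] at h
        exact Fin.ext (by simpa using h)
      have hstep1 : f ⟨n, by omega⟩ = τ ⟨n + 1, by omega⟩ := by
        rw [hfapp, hσn]
      have h2 : τ.SameCycle (τ ⟨n + 1, by omega⟩) ⟨n + 1, by omega⟩ := ⟨-1, by simp⟩
      have h3 : f.SameCycle (f ⟨n, by omega⟩) ⟨n + 1, by omega⟩ := by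
        rw [hstep1]; exact L1 _ _ (by simpa using hs) h2
      have h4 : f.SameCycle ⟨n, by omega⟩ (f ⟨n, by omega⟩) := ⟨1, by simp⟩
      exact ihn.trans (h4.trans h3)
  -- all points in cycle of 0
  have L3 : ∀ x : Fin m, f.SameCycle ⟨0, by omega⟩ x := by
    intro x
    obtain ⟨w, ⟨hw1, hw2⟩, _⟩ := hτ x
    have h1 : f.SameCycle x w := L1 x w hw1 hw2
    have h2 : f.SameCycle ⟨0, by omega⟩ ⟨(w : ℕ), by omega⟩ := L2 w hw1
    have hww : (⟨(w : ℕ), by omega⟩ : Fin m) = w := Fin.ext rfl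
    rw [hww] at h2
    exact h2.trans h1.symm
  -- no fixed points
  have hnofix : ∀ y : Fin m, f y ≠ y := by
    intro y hy
    obtain ⟨n, hn⟩ := (L3 y).symm
    rw [Equiv.Perm.zpow_apply_eq_self_of_apply_eq_self hy n] at hn
    subst hn
    obtain ⟨n, hn⟩ := L3 ⟨1, by omega⟩
    rw [Equiv.Perm.zpow_apply_eq_self_of_apply_eq_self hy n] at hn
    exact absurd (congrArg Fin.val hn) (by simp)
  constructor
  · exact ⟨⟨0, by omega⟩, hnofix _, fun y _ => L3 y⟩
  · ext y
    simp [Equiv.Perm.mem_support, hnofix y]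
end

section
/- Let m ≥ n ≥ 2 and let (d₂⁺, d₂⁻, …, dₙ⁺, dₙ⁻) be non-negative integers with m = Σ_{j=2}^{n}(j−1)(dⱼ⁺+dⱼ⁻) + 1, m ≥ Σ_{j=2}^{n} j dⱼ⁺, and m ≥ Σ_{j=2}^{n} j dⱼ⁻. Assume Σ_{j=2}^{n} dⱼ⁺ ≥ 2, Σ_{j=2}^{n} dⱼ⁻ ≥ 2, and Σ_{j=2}^{n} j dⱼ⁻ ≥ Σ_{j=2}^{n} j dⱼ⁺. Let i = min{ j : dⱼ⁻ > 0 }. Then, setting m' = m − i + 1, one has m' ≥ 2, Σ_{j=2}^{n} j dⱼ⁻ − i < m', and Σ_{j=2}^{n} j dⱼ⁺ ≤ m'. -/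
theorem stmt3 (m n : ℕ) (dp dm : ℕ → ℕ) (hn : 2 ≤ n) (hnm : n ≤ m)
    (h1 : m = (∑ j ∈ Finset.Icc 2 n, (j - 1) * (dp j + dm j)) + 1)
    (h2 : ∑ j ∈ Finset.Icc 2 n, j * dp j ≤ m)
    (h3 : ∑ j ∈ Finset.Icc 2 n, j * dm j ≤ m)
    (h4 : 2 ≤ ∑ j ∈ Finset.Icc 2 n, dp j)
    (h5 : 2 ≤ ∑ j ∈ Finset.Icc 2 n, dm j)
    (h6 : ∑ j ∈ Finset.Icc 2 n, j * dp j ≤ ∑ j ∈ Finset.Icc 2 n, j * dm j)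
    (i : ℕ) (hi : i = sInf {j | 2 ≤ j ∧ j ≤ n ∧ 0 < dm j}) :
    2 ≤ m - i + 1 ∧
    (∑ j ∈ Finset.Icc 2 n, j * dm j) - i < m - i + 1 ∧
    ∑ j ∈ Finset.Icc 2 n, j * dp j ≤ m - i + 1 := by
  -- the set is nonempty
  have hsum_ne : ∑ j ∈ Finset.Icc 2 n, dm j ≠ 0 := by omega
  obtain ⟨j0, hj0mem, hj0⟩ := Finset.exists_ne_zero_of_sum_ne_zero hsum_ne
  rw [Finset.mem_Icc] at hj0mem
  have hne : {j | 2 ≤ j ∧ j ≤ n ∧ 0 < dm j}.Nonempty :=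
    ⟨j0, hj0mem.1, hj0mem.2, Nat.pos_of_ne_zero hj0⟩
  have him : i ∈ {j | 2 ≤ j ∧ j ≤ n ∧ 0 < dm j} := hi ▸ Nat.sInf_mem hne
  obtain ⟨hi2, hin, hdmi⟩ := him
  -- key sum identity : A + B = (m-1) + (P + Q)
  have key : (∑ j ∈ Finset.Icc 2 n, j * dp j) + (∑ j ∈ Finset.Icc 2 n, j * dm j)
      = (∑ j ∈ Finset.Icc 2 n, (j - 1) * (dp j + dm j))
        + ((∑ j ∈ Finset.Icc 2 n, dp j) + (∑ j ∈ Finset.Icc 2 n, dm j)) := by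
    rw [← Finset.sum_add_distrib, ← Finset.sum_add_distrib, ← Finset.sum_add_distrib]
    apply Finset.sum_congr rfl
    intro j hj
    rw [Finset.mem_Icc] at hj
    obtain ⟨k, rfl⟩ : ∃ k, j = k + 1 := ⟨j - 1, by omega⟩
    simp only [Nat.add_sub_cancel]
    ring
  -- 2P ≤ A
  have hA2P : 2 * (∑ j ∈ Finset.Icc 2 n, dp j) ≤ ∑ j ∈ Finset.Icc 2 n, j * dp j := by
    rw [Finset.mul_sum]
    apply Finset.sum_le_sum
    intro j hj
    rw [Finset.mem_Icc] at hj
    exact Nat.mul_le_mul_right _ hj.1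
  -- i*Q ≤ B
  have hiQ : i * (∑ j ∈ Finset.Icc 2 n, dm j) ≤ ∑ j ∈ Finset.Icc 2 n, j * dm j := by
    rw [Finset.mul_sum]
    apply Finset.sum_le_sum
    intro j hj
    rw [Finset.mem_Icc] at hj
    rcases Nat.eq_zero_or_pos (dm j) with h | h
    · simp [h]
    · have : i ≤ j := hi ▸ Nat.sInf_le ⟨hj.1, hj.2, h⟩
      exact Nat.mul_le_mul_right _ this
  -- i*Q ≥ 2Q + 2(i-2)
  have h7 : 2 * (∑ j ∈ Finset.Icc 2 n, dm j) + (i - 2) * 2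
      ≤ i * (∑ j ∈ Finset.Icc 2 n, dm j) := by
    have h8 : (i - 2) * 2 ≤ (i - 2) * (∑ j ∈ Finset.Icc 2 n, dm j) :=
      Nat.mul_le_mul_left _ h5
    have h9 : i * (∑ j ∈ Finset.Icc 2 n, dm j)
        = 2 * (∑ j ∈ Finset.Icc 2 n, dm j) + (i - 2) * (∑ j ∈ Finset.Icc 2 n, dm j) := by
      rw [← Nat.add_mul]
      congr 1
      omega
    omega
  -- i*2 ≤ i*Q
  have h9 : i * 2 ≤ i * (∑ j ∈ Finset.Icc 2 n, dm j) := Nat.mul_le_mul_left _ h5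
  omega
end

section
/- Let m ≥ 1 and let q ∈ ℂ[z] be a monic polynomial of degree 2m whose coefficient of z^{2m−1} is zero. Then there exist a unique monic polynomial ν ∈ ℂ[z] of degree m whose coefficient of z^{m−1} is zero and a unique polynomial b ∈ ℂ[z] of degree at most m − 1 such that q = ν² − 4b. -/
open Polynomial

lemma stmt9_degree_C_mul (a : ℂ) (p : Polynomial ℂ) : (C a * p).degree ≤ p.degree :=
  (degree_mul_le _ _).trans (by simpa using add_le_add_left (degree_C_le (a := a)) p.degree)

lemma stmt9_degree_four_mul (p : Polynomial ℂ) : ((4 : Polynomial ℂ) * p).degree ≤ p.degree := by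
  rw [(map_ofNat (C : ℂ →+* Polynomial ℂ) 4).symm]
  exact stmt9_degree_C_mul 4 p

/-- Auxiliary induction: one can kill the top coefficients of `q - ν^2` one by one. -/
lemma stmt9_aux (m : ℕ) (hm : 1 ≤ m) (q : Polynomial ℂ)
    (hq : q.Monic) (hqd : q.natDegree = 2 * m) (hqc : q.coeff (2 * m - 1) = 0) (k : ℕ) :
    ∃ ν : Polynomial ℂ, ν.Monic ∧ ν.natDegree = m ∧ ν.coeff (m - 1) = 0 ∧
      ∀ j, m ≤ j → 2 * m - 1 ≤ j + k → (q - ν ^ 2).coeff j = 0 := by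
  induction k with
  | zero =>
    refine ⟨X ^ m, monic_X_pow m, by simp, ?_, ?_⟩
    · rw [coeff_X_pow]
      simp only [if_neg (by omega : ¬ m - 1 = m)]
    · intro j hj hj2
      have h2 : (X ^ m : Polynomial ℂ) ^ 2 = X ^ (2 * m) := by
        rw [← pow_mul]; ring_nf
      rw [coeff_sub, h2, coeff_X_pow]
      rcases eq_or_lt_of_le (show 2 * m - 1 ≤ j from by omega) with h | h
      · rw [← h, hqc, if_neg (by omega)]; ring
      · rcases eq_or_lt_of_le (show 2 * m ≤ j from by omega) with h' | h'
        · rw [← h', if_pos rfl, ← hqd, hq.coeff_natDegree]; ring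
        · rw [coeff_eq_zero_of_natDegree_lt (by omega : q.natDegree < j),
            if_neg (by omega)]; ring
  | succ k ih =>
    obtain ⟨ν, hν, hνd, hνc, hco⟩ := ih
    by_cases hk : 2 * m - 1 ≤ m + k
    · exact ⟨ν, hν, hνd, hνc, fun j hj _ => hco j hj (by omega)⟩
    · -- here k + 2 ≤ m
      have hkm : k + 2 ≤ m := by omega
      set n : ℕ := m - 2 - k with hn
      have hnm : n + 2 + k = m := by omega
      set e : ℕ := m + n with he
      set c : ℂ := (q - ν ^ 2).coeff e / 2 with hc
      refine ⟨ν + C c * X ^ n, ?_, ?_, ?_, ?_⟩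
      · refine hν.add_of_left ?_
        calc (C c * X ^ n).degree ≤ (n : WithBot ℕ) := degree_C_mul_X_pow_le n c
          _ < (m : WithBot ℕ) := by exact_mod_cast (by omega : n < m)
          _ = ν.degree := by rw [degree_eq_natDegree hν.ne_zero, hνd]
      · rw [natDegree_add_eq_left_of_degree_lt, hνd]
        calc (C c * X ^ n).degree ≤ (n : WithBot ℕ) := degree_C_mul_X_pow_le n c
          _ < (m : WithBot ℕ) := by exact_mod_cast (by omega : n < m)
          _ = ν.degree := by rw [degree_eq_natDegree hν.ne_zero, hνd]
      · rw [coeff_add, hνc, coeff_C_mul, coeff_X_pow, if_neg (by omega : ¬ m - 1 = n)]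
        ring
      · intro j hj hj2
        have hje : e ≤ j := by omega
        have hexp : (ν + C c * X ^ n) ^ 2
            = ν ^ 2 + C (2 * c) * (ν * X ^ n) + C (c ^ 2) * X ^ (2 * n) := by
          have hC2 : (C 2 : Polynomial ℂ) = 2 := map_ofNat (C : ℂ →+* Polynomial ℂ) 2
          rw [C_mul, C_pow, hC2]; ring
        have hνm : ν.coeff m = 1 := by
          have := hν.coeff_natDegree; rwa [hνd] at this
        have hq2 : (q - (ν + C c * X ^ n) ^ 2).coeff j
            = (q - ν ^ 2).coeff j - 2 * c * (ν * X ^ n).coeff j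
              - c ^ 2 * (X ^ (2 * n) : Polynomial ℂ).coeff j := by
          rw [hexp]
          simp only [coeff_sub, coeff_add, coeff_C_mul]
          ring
        rw [hq2, coeff_mul_X_pow', if_pos (by omega : n ≤ j), coeff_X_pow,
          if_neg (by omega : ¬ j = 2 * n)]
        rcases eq_or_lt_of_le hje with h | h
        · have hh : j - n = m := by omega
          rw [hh, hνm, ← h]
          have : (q - ν ^ 2).coeff e = 2 * c := by
            rw [hc]; field_simp
          rw [this]; ring
        · rw [hco j hj (by omega),
            coeff_eq_zero_of_natDegree_lt (show ν.natDegree < j - n from by omega)]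
          ring

lemma stmt9_uniq (m : ℕ) (hm : 1 ≤ m) {ν₁ ν₂ b₁ b₂ : Polynomial ℂ}
    (h₁ : ν₁.Monic) (hd₁ : ν₁.natDegree = m)
    (hb₁ : b₁.degree ≤ ((m - 1 : ℕ) : WithBot ℕ))
    (h₂ : ν₂.Monic) (hd₂ : ν₂.natDegree = m)
    (hb₂ : b₂.degree ≤ ((m - 1 : ℕ) : WithBot ℕ))
    (heq : ν₁ ^ 2 - 4 * b₁ = ν₂ ^ 2 - 4 * b₂) : ν₁ = ν₂ ∧ b₁ = b₂ := by
  have hν : ν₁ = ν₂ := by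
    by_contra hne
    have hp : ν₁ - ν₂ ≠ 0 := sub_ne_zero.mpr hne
    have hs2 : (ν₁ + ν₂).coeff m = 2 := by
      rw [coeff_add, ← hd₁, h₁.coeff_natDegree, hd₁, ← hd₂, h₂.coeff_natDegree]
      norm_num
    have hsd : (ν₁ + ν₂).natDegree = m := by
      refine le_antisymm ?_ (le_natDegree_of_ne_zero (by rw [hs2]; norm_num))
      exact natDegree_add_le_of_degree_le (by omega) (by omega)
    have hs0 : ν₁ + ν₂ ≠ 0 := fun h => by simp [h] at hs2
    have hfac : (ν₁ - ν₂) * (ν₁ + ν₂) = 4 * b₁ - 4 * b₂ := by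
      linear_combination heq
    have hdegR : ((ν₁ - ν₂) * (ν₁ + ν₂)).degree ≤ ((m - 1 : ℕ) : WithBot ℕ) := by
      rw [hfac]
      refine (degree_sub_le _ _).trans (max_le ?_ ?_)
      · exact (stmt9_degree_four_mul b₁).trans hb₁
      · exact (stmt9_degree_four_mul b₂).trans hb₂
    have hmul0 : (ν₁ - ν₂) * (ν₁ + ν₂) ≠ 0 := mul_ne_zero hp hs0
    have hnd : ((ν₁ - ν₂) * (ν₁ + ν₂)).natDegree = (ν₁ - ν₂).natDegree + m := by
      rw [natDegree_mul hp hs0, hsd]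
    have := natDegree_le_iff_degree_le.mpr hdegR
    omega
  refine ⟨hν, ?_⟩
  have h4 : (4 : Polynomial ℂ) * b₁ = 4 * b₂ := by
    rw [hν] at heq; linear_combination -heq
  exact mul_left_cancel₀ (by norm_num : (4 : Polynomial ℂ) ≠ 0) h4

theorem stmt9 (m : ℕ) (hm : 1 ≤ m) (q : Polynomial ℂ)
    (hq : q.Monic) (hqd : q.natDegree = 2 * m) (hqc : q.coeff (2 * m - 1) = 0) :
    ∃! νb : Polynomial ℂ × Polynomial ℂ,
      νb.1.Monic ∧ νb.1.natDegree = m ∧ νb.1.coeff (m - 1) = 0 ∧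
      νb.2.degree ≤ ((m - 1 : ℕ) : WithBot ℕ) ∧
      q = νb.1 ^ 2 - 4 * νb.2 := by
  obtain ⟨ν, hν, hνd, hνc, hco⟩ := stmt9_aux m hm q hq hqd hqc m
  set b : Polynomial ℂ := C (4⁻¹ : ℂ) * (ν ^ 2 - q) with hb
  have hres : (ν ^ 2 - q).degree ≤ ((m - 1 : ℕ) : WithBot ℕ) := by
    rw [degree_le_iff_coeff_zero]
    intro j hj
    have hj' : m ≤ j := by
      have : (m - 1 : ℕ) < j := by exact_mod_cast hj
      omega
    have := hco j hj' (by omega)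
    rw [coeff_sub] at this ⊢
    linear_combination -this
  have hbdeg : b.degree ≤ ((m - 1 : ℕ) : WithBot ℕ) := (stmt9_degree_C_mul 4⁻¹ _).trans hres
  have h4 : (4 : Polynomial ℂ) * C (4⁻¹ : ℂ) = 1 := by
    rw [(map_ofNat (C : ℂ →+* Polynomial ℂ) 4).symm, ← C_mul]; norm_num
  have hqe : q = ν ^ 2 - 4 * b := by
    rw [hb, ← mul_assoc, h4, one_mul]; ring
  refine ⟨(ν, b), ⟨hν, hνd, hνc, hbdeg, hqe⟩, ?_⟩
  rintro ⟨ν₂, b₂⟩ ⟨h₂, hd₂, hc₂, hb₂, hq₂⟩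
  obtain ⟨e1, e2⟩ := stmt9_uniq m hm h₂ hd₂ hb₂ hν hνd hbdeg (by rw [← hq₂, hqe])
  exact Prod.ext e1 e2
end
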